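/- arXiv:2303.13401 — 2 statements merged into one kernel-verified Lean document; each statement's English description precedes it below -/
import Mathlib

section
/- Let C ⊆ ℝ be a nonempty closed convex set, let g : ℝ → ℝ be a convex function, and let y ∈ ℝ. Suppose u ∈ ℝ minimizes the function z ↦ ½(y − z)² + g(z) over all of ℝ, and suppose v ∈ C minimizes z ↦ (u − z)² over C (i.e., v is the nearest point of C to u). Then v minimizes z ↦ ½(y − z)² + g(z) over C; that is, for every z ∈ C, ½(y − v)² + g(v) ≤ ½(y − z)² + g(z). -/
/-- one-dimensional prox decomposition: if `u` minimizes
`z ↦ ½(y - z)² + g z` over `ℝ` (with `g` convex) and `v ∈ C` is a nearest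
point of the nonempty closed convex set `C ⊆ ℝ` to `u`, then `v` minimizes
`z ↦ ½(y - z)² + g z` over `C`. -/
theorem prox_decomposition_one_dim (C : Set ℝ) (hCne : C.Nonempty) (hCcl : IsClosed C)
    (hCco : Convex ℝ C) (g : ℝ → ℝ) (hg : ConvexOn ℝ Set.univ g) (y u v : ℝ)
    (hu : ∀ z : ℝ, (y - u) ^ 2 / 2 + g u ≤ (y - z) ^ 2 / 2 + g z)
    (hvC : v ∈ C) (hv : ∀ z ∈ C, (u - v) ^ 2 ≤ (u - z) ^ 2) :
    ∀ z ∈ C, (y - v) ^ 2 / 2 + g v ≤ (y - z) ^ 2 / 2 + g z := by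
  intro z hz
  rcases eq_or_ne u z with rfl | huz
  · have hvu : v = u := by nlinarith [hv u hz, sq_nonneg (u - v)]
    rw [hvu]
  · -- projection inequality: (u - v) * (z - v) ≤ 0
    have key : (u - v) * (z - v) ≤ 0 := by
      by_contra h
      push_neg at h
      have hzv : z - v ≠ 0 := by
        intro h0
        rw [h0, mul_zero] at h
        exact lt_irrefl _ h
      have hzv2 : 0 < (z - v) ^ 2 := by positivity
      set s := min 1 ((u - v) * (z - v) / (z - v) ^ 2) with hs
      have hs0 : 0 < s := lt_min one_pos (div_pos h hzv2)
      have hs1 : s ≤ 1 := min_le_left _ _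
      have hw : (1 - s) • v + s • z ∈ C :=
        hCco hvC hz (by linarith) hs0.le (by ring)
      have hle := hv _ hw
      simp only [smul_eq_mul] at hle
      have htle : s * (z - v) ^ 2 ≤ (u - v) * (z - v) := by
        have h2 : s ≤ (u - v) * (z - v) / (z - v) ^ 2 := min_le_right _ _
        calc s * (z - v) ^ 2 ≤ ((u - v) * (z - v) / (z - v) ^ 2) * (z - v) ^ 2 :=
              mul_le_mul_of_nonneg_right h2 hzv2.le
          _ = (u - v) * (z - v) := by field_simp
      nlinarith [mul_le_mul_of_nonneg_left htle hs0.le, mul_pos hs0 h]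
    -- v is a convex combination of u and z
    have hzu : z - u ≠ 0 := sub_ne_zero.mpr (Ne.symm huz)
    have hzu2 : 0 < (z - u) ^ 2 := by positivity
    set t := (v - u) * (z - u) / (z - u) ^ 2 with htdef
    have hnum0 : 0 ≤ (v - u) * (z - u) := by nlinarith [key, sq_nonneg (v - u)]
    have hnum1 : (v - u) * (z - u) ≤ (z - u) ^ 2 := by nlinarith [key, sq_nonneg (z - v)]
    have ht0 : 0 ≤ t := div_nonneg hnum0 hzu2.le
    have ht1 : t ≤ 1 := (div_le_one hzu2).mpr hnum1
    have hvt : v = (1 - t) * u + t * z := by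
      rw [htdef]; field_simp; ring
    have hgv := hg.2 (Set.mem_univ u) (Set.mem_univ z) (by linarith : (0:ℝ) ≤ 1 - t) ht0
      (by ring : (1 - t) + t = 1)
    simp only [smul_eq_mul] at hgv
    rw [← hvt] at hgv
    have hFu := hu z
    have hq : (y - v) ^ 2 ≤ (1 - t) * (y - u) ^ 2 + t * (y - z) ^ 2 := by
      rw [hvt]
      nlinarith [mul_nonneg (mul_nonneg ht0 (by linarith : (0:ℝ) ≤ 1 - t)) (sq_nonneg (u - z))]
    nlinarith [hq, hgv, mul_le_mul_of_nonneg_left hFu (by linarith : (0:ℝ) ≤ 1 - t)]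
end

section
/- There exist x ∈ ℝ² with x_1, x_2 ∈ [0,1], ε > 0, and w ∈ ℝ² such that neither sequential projection yields the true Euclidean projection of w onto Δ = {δ ∈ ℝ² : ‖δ‖_2 ≤ ε and x + δ ∈ [0,1]²}: there are points δ, δ' ∈ Δ with ‖w − δ‖_2 < ‖w − P_2(P_box(w))‖_2 and ‖w − δ'‖_2 < ‖w − P_box(P_2(w))‖_2. -/
/-- Coordinatewise box projector onto `{δ : x + δ ∈ [0,1]ⁿ}`. -/
def Pbox (n : ℕ) (x : Fin n → ℝ) (y : Fin n → ℝ) : Fin n → ℝ :=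
  fun i => max (-x i) (min (y i) (1 - x i))

/-- Euclidean norm on `Fin n → ℝ`. -/
noncomputable def l2norm (n : ℕ) (z : Fin n → ℝ) : ℝ :=
  Real.sqrt (∑ i, (z i) ^ 2)

/-- Radial projector onto the `ℓ2` ball of radius `ε`. -/
noncomputable def P2 (n : ℕ) (ε : ℝ) (y : Fin n → ℝ) : Fin n → ℝ :=
  if l2norm n y ≤ ε then y else fun i => (ε / l2norm n y) * y i

/-- in dimension 2, neither sequential projection
(`P_2 ∘ P_box` nor `P_box ∘ P_2`) computes the true Euclidean projection onto
`Δ = {δ : ‖δ‖₂ ≤ ε and x + δ ∈ [0,1]²}` in general. -/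
theorem seq_proj_l2_box_not_exact :
    ∃ (x : Fin 2 → ℝ) (ε : ℝ) (w : Fin 2 → ℝ),
      (∀ i, x i ∈ Set.Icc (0 : ℝ) 1) ∧ 0 < ε ∧
      (∃ δ : Fin 2 → ℝ, (l2norm 2 δ ≤ ε ∧ ∀ i, x i + δ i ∈ Set.Icc (0 : ℝ) 1) ∧
        l2norm 2 (fun i => w i - δ i) < l2norm 2 (fun i => w i - P2 2 ε (Pbox 2 x w) i)) ∧
      (∃ δ' : Fin 2 → ℝ, (l2norm 2 δ' ≤ ε ∧ ∀ i, x i + δ' i ∈ Set.Icc (0 : ℝ) 1) ∧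
        l2norm 2 (fun i => w i - δ' i) < l2norm 2 (fun i => w i - Pbox 2 x (P2 2 ε w) i)) := by
  refine ⟨![0, 2/5], 1, ![1, 2], ?_, one_pos, ?_, ?_⟩
  · intro i; fin_cases i <;> norm_num
  · -- P2 ∘ Pbox branch
    have hδnorm : l2norm 2 ![(4:ℝ)/5, 3/5] = 1 := by
      simp [l2norm, Fin.sum_univ_two]
      norm_num
    refine ⟨![4/5, 3/5], ⟨by rw [hδnorm], ?_⟩, ?_⟩
    · intro i; fin_cases i <;> norm_num
    · have hbox : Pbox 2 ![0, 2/5] ![1, 2] = ![1, 3/5] := by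
        funext i; fin_cases i <;> simp [Pbox] <;> norm_num
      set s : ℝ := Real.sqrt (34/25) with hs
      have hs2 : s ^ 2 = 34/25 := Real.sq_sqrt (by norm_num)
      have hsgt : 11/10 < s := by
        rw [hs, show (11/10:ℝ) = Real.sqrt ((11/10)^2) by
          rw [Real.sqrt_sq (by norm_num)]]
        exact Real.sqrt_lt_sqrt (by positivity) (by norm_num)
      have hspos : 0 < s := lt_trans (by norm_num) hsgt
      have hnorm : l2norm 2 ![(1:ℝ), 3/5] = s := by
        simp [l2norm, Fin.sum_univ_two, hs]
        norm_num
      have hP2 : P2 2 1 (Pbox 2 ![0, 2/5] ![1, 2]) = fun i => (1/s) * (![1, 3/5] : Fin 2 → ℝ) i := by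
        rw [hbox]
        unfold P2
        rw [hnorm, if_neg (by linarith)]
      rw [hP2]
      unfold l2norm
      rw [Fin.sum_univ_two, Fin.sum_univ_two]
      apply Real.sqrt_lt_sqrt (by positivity)
      simp only [Matrix.cons_val_zero, Matrix.cons_val_one, Matrix.head_cons]
      have h1 : (1/s)^2 = 25/34 := by
        rw [div_pow]; rw [hs2]; norm_num
      nlinarith [sq_nonneg (1/s), hspos, hsgt, h1]
  · -- Pbox ∘ P2 branch
    have hδnorm : l2norm 2 ![(4:ℝ)/5, 3/5] = 1 := by
      simp [l2norm, Fin.sum_univ_two]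
      norm_num
    refine ⟨![4/5, 3/5], ⟨by rw [hδnorm], ?_⟩, ?_⟩
    · intro i; fin_cases i <;> norm_num
    · set t : ℝ := Real.sqrt 5 with ht
      have ht2 : t ^ 2 = 5 := Real.sq_sqrt (by norm_num)
      have htgt : 2 < t := by
        rw [ht, show (2:ℝ) = Real.sqrt 4 by rw [show (4:ℝ) = 2^2 by norm_num, Real.sqrt_sq (by norm_num)]]
        exact Real.sqrt_lt_sqrt (by norm_num) (by norm_num)
      have htlt : t < 5/2 := by
        rw [ht]
        rw [show (5/2:ℝ) = Real.sqrt ((5/2)^2) by rw [Real.sqrt_sq (by norm_num)]]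
        exact Real.sqrt_lt_sqrt (by norm_num) (by norm_num)
      have htpos : 0 < t := by linarith
      have hnormw : l2norm 2 ![(1:ℝ), 2] = t := by
        simp [l2norm, Fin.sum_univ_two, ht]
        norm_num
      have hP2w : P2 2 1 ![(1:ℝ), 2] = fun i => (1/t) * (![1, 2] : Fin 2 → ℝ) i := by
        unfold P2
        rw [hnormw, if_neg (by linarith)]
      have hinv1 : t⁻¹ ≤ 1 := by
        rw [inv_le_one_iff₀]; right; linarith
      have hinvpos : (0:ℝ) ≤ t⁻¹ := by positivity
      have h35 : (3:ℝ)/5 ≤ 1/t * 2 := by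
        rw [div_mul_eq_mul_div, le_div_iff₀ htpos]; linarith
      have hboxP2 : Pbox 2 ![0, 2/5] (P2 2 1 ![(1:ℝ), 2]) = ![1/t, 3/5] := by
        rw [hP2w]
        have h35' : (3:ℝ)/5 ≤ t⁻¹ * 2 := by rw [one_div] at h35; exact h35
        funext i
        fin_cases i <;> simp [Pbox]
        · rw [min_eq_left hinv1, max_eq_right hinvpos]
        · rw [show (1:ℝ) - 2/5 = 3/5 by norm_num, min_eq_right h35',
            max_eq_right (by norm_num)]
      rw [hboxP2]
      unfold l2norm
      rw [Fin.sum_univ_two, Fin.sum_univ_two]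
      apply Real.sqrt_lt_sqrt (by positivity)
      simp only [Matrix.cons_val_zero, Matrix.cons_val_one, Matrix.head_cons]
      have h1 : (1/t)^2 = 1/5 := by
        rw [div_pow]; rw [ht2]; norm_num
      nlinarith [htgt, htlt, h1]
end
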